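/- Let 0 < μ ≤ L, Q := L/μ ≥ 1, σ ∈ [0, 1), integer n ≥ 1. Set α := (1−σ²)²/(187QL) and let T be any integer with T ≥ (1496Q²/(1−σ²)²)·log(200Q). Then with q := (1, 1, 1453/(1−σ²)²), ‖ J_α^T + (I₃ − J_α)^{−1} H_α ‖_∞^q ≤ 0.7. Consequently, any sequence of entrywise-nonnegative vectors (u^{tT})_{t≥0} in ℝ³ satisfying u^{(t+1)T} ≤ (J_α^T + (I₃ − J_α)^{−1} H_α) u^{tT} entrywise obeys ‖u^{(t+1)T}‖_∞^q ≤ 0.7 ‖u^{tT}‖_∞^q for all t ≥ 0, i.e., linear decay at rate 0.7 per outer loop. -/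

import Mathlib

/-- The system matrix `J_α` governing GT-SVRG. -/
noncomputable def GTSVRGMatrixJ (μ L σ α : ℝ) : Matrix (Fin 3) (Fin 3) ℝ :=
  !![(1 + σ ^ 2) / 2, 0, 2 * α ^ 2 * L ^ 2 / (1 - σ ^ 2);
     2 * L ^ 2 * α / μ, 1 - μ * α / 2, 0;
     120 / (1 - σ ^ 2), 87 / (1 - σ ^ 2), (3 + σ ^ 2) / 4]

/-- The input matrix `H_α` governing GT-SVRG. -/
noncomputable def GTSVRGMatrixH (L σ α : ℝ) (n : ℕ) : Matrix (Fin 3) (Fin 3) ℝ :=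
  !![0, 0, 0;
     4 * L ^ 2 * α ^ 2 / n, 4 * L ^ 2 * α ^ 2 / n, 0;
     38 / (1 - σ ^ 2), 38 / (1 - σ ^ 2), 0]

/-- The weighted infinity matrix norm `‖A‖_∞^w = max_i (∑_j |A i j| * w j) / w i`
induced by a positive weight vector `w`. -/
noncomputable def wInfMatNorm {d : ℕ} (w : Fin d → ℝ) (A : Matrix (Fin d) (Fin d) ℝ) : ℝ :=
  ⨆ i, (∑ j, |A i j| * w j) / w i

/-- The weighted infinity vector norm `‖v‖_∞^w = max_i |v i| / w i`. -/
noncomputable def wInfVecNorm {d : ℕ} (w v : Fin d → ℝ) : ℝ :=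
  ⨆ i, |v i| / w i

noncomputable def gtJ (s Q : ℝ) : Matrix (Fin 3) (Fin 3) ℝ :=
  !![1 - s/2, 0, 2*s^3/(34969*Q^2);
     2*s^2/187, 1 - s^2/(374*Q^2), 0;
     120/s, 87/s, 1 - s/4]

noncomputable def gtH (s Q : ℝ) (n : ℕ) : Matrix (Fin 3) (Fin 3) ℝ :=
  !![0, 0, 0;
     4*s^4/(34969*Q^2*n), 4*s^4/(34969*Q^2*n), 0;
     38/s, 38/s, 0]

lemma gt_pow_nonneg {A : Matrix (Fin 3) (Fin 3) ℝ} (hA : ∀ i j, 0 ≤ A i j) (T : ℕ) :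
    ∀ i j, 0 ≤ (A ^ T) i j := by
  induction T with
  | zero => intro i j; rw [pow_zero, Matrix.one_apply]; split <;> norm_num
  | succ k ih =>
    intro i j
    rw [pow_succ, Matrix.mul_apply]
    exact Finset.sum_nonneg fun l _ => mul_nonneg (ih i l) (hA l j)

lemma gt_pow_mulVec {A : Matrix (Fin 3) (Fin 3) ℝ} (hA : ∀ i j, 0 ≤ A i j)
    {w : Fin 3 → ℝ} {ρ : ℝ} (hρ : 0 ≤ ρ)
    (h : ∀ i, A.mulVec w i ≤ ρ * w i) (T : ℕ) :
    ∀ i, (A ^ T).mulVec w i ≤ ρ ^ T * w i := by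
  induction T with
  | zero => intro i; simp [Matrix.one_mulVec]
  | succ k ih =>
    intro i
    rw [pow_succ', ← Matrix.mulVec_mulVec]
    have hmv : ∀ (B : Matrix (Fin 3) (Fin 3) ℝ) (x : Fin 3 → ℝ) (i : Fin 3),
        B.mulVec x i = ∑ j, B i j * x j := fun B x i => by
      simp [Matrix.mulVec, dotProduct]
    have h1 : A.mulVec ((A ^ k).mulVec w) i ≤ ρ ^ k * A.mulVec w i := by
      rw [hmv, hmv, Finset.mul_sum]
      refine Finset.sum_le_sum fun j _ => ?_
      calc A i j * (A ^ k).mulVec w j ≤ A i j * (ρ ^ k * w j) :=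
            mul_le_mul_of_nonneg_left (ih j) (hA i j)
        _ = ρ ^ k * (A i j * w j) := by ring
    calc A.mulVec ((A ^ k).mulVec w) i ≤ ρ ^ k * A.mulVec w i := h1
      _ ≤ ρ ^ k * (ρ * w i) := mul_le_mul_of_nonneg_left (h i) (pow_nonneg hρ k)
      _ = ρ ^ (k + 1) * w i := by ring

set_option maxHeartbeats 2000000 in
lemma gt_key (s Q : ℝ) (n : ℕ) (hs0 : 0 < s) (hs1 : s ≤ 1) (hQ1 : 1 ≤ Q) (hn : 1 ≤ n)
    (T : ℕ) (hT : 1496 * Q ^ 2 / s ^ 2 * Real.log (200 * Q) ≤ (T : ℝ)) :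
    wInfMatNorm ![1, 1, 1453 / s ^ 2] (gtJ s Q ^ T + (1 - gtJ s Q)⁻¹ * gtH s Q n) ≤ 0.7 := by
  have hQ0 : (0:ℝ) < Q := lt_of_lt_of_le one_pos hQ1
  have hsne : s ≠ 0 := ne_of_gt hs0
  have hQne : Q ≠ 0 := ne_of_gt hQ0
  have hn1 : (1:ℝ) ≤ (n:ℝ) := by exact_mod_cast hn
  have hn0 : (0:ℝ) < (n:ℝ) := by linarith
  have hnne : (n:ℝ) ≠ 0 := ne_of_gt hn0
  have hQsq : (1:ℝ) ≤ Q^2 := by nlinarith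
  have hmv3 : ∀ (B : Matrix (Fin 3) (Fin 3) ℝ) (v : Fin 3 → ℝ) (i : Fin 3),
      B.mulVec v i = B i 0 * v 0 + B i 1 * v 1 + B i 2 * v 2 := fun B v i => by
    simp [Matrix.mulVec, dotProduct, Fin.sum_univ_three]
  set q : Fin 3 → ℝ := ![1, 1, 1453 / s ^ 2] with hqdef
  set w : Fin 3 → ℝ := ![1, 8*Q^2, 6528*Q^2/s^2] with hwdef
  have hq : ∀ i, 0 < q i := by
    intro i; fin_cases i <;> simp [hqdef] <;> positivity
  have hqw : ∀ j, q j ≤ w j := by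
    intro j; fin_cases j <;> simp [hqdef, hwdef]
    · nlinarith
    · gcongr <;> nlinarith
  have hwq : ∀ i, w i ≤ 8*Q^2 * q i := by
    intro i; fin_cases i <;> simp [hqdef, hwdef]
    · nlinarith
    · have h8 : 8*Q^2 * (1453 / s^2) = 11624*Q^2/s^2 := by ring
      rw [h8]; gcongr <;> nlinarith
  set ρ : ℝ := 1 - s^2/(748*Q^2) with hρdef
  have hδpos : 0 < s^2/(748*Q^2) := by positivity
  have hρ0 : 0 ≤ ρ := by
    have h1 : s^2/(748*Q^2) ≤ 1 := by rw [div_le_one (by positivity)]; nlinarith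
    rw [hρdef]; linarith
  have hJnn : ∀ i j, 0 ≤ gtJ s Q i j := by
    intro i j
    fin_cases i <;> fin_cases j <;> simp [gtJ] <;>
      first
        | positivity
        | linarith
        | (rw [div_le_one (by positivity)]; nlinarith)
  have hJw : ∀ i, (gtJ s Q).mulVec w i ≤ ρ * w i := by
    intro i
    fin_cases i <;> rw [hmv3] <;> simp [gtJ, hwdef, hρdef]
    · rw [← sub_nonneg]
      field_simp
      simp only [zero_mul]
      nlinarith [mul_nonneg (mul_nonneg (sq_nonneg Q) (pow_nonneg hs0.le 3))
        (by nlinarith : (0:ℝ) ≤ 6625036*Q^2 - 69938*s)]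
    · rw [← sub_nonneg]
      field_simp
      simp only [zero_mul]
      nlinarith [sq_nonneg (s*Q)]
    · rw [← sub_nonneg]
      field_simp
      simp only [zero_mul]
      nlinarith [mul_nonneg (mul_nonneg (sq_nonneg Q) (sq_nonneg s))
        (by nlinarith : (0:ℝ) ≤ 700128*Q^2 - 89760 - 6528*s)]
  have hJTnn := gt_pow_nonneg hJnn T
  have hJTw := gt_pow_mulVec hJnn hρ0 hJw T
  have hlog : 0 ≤ Real.log (200*Q) := Real.log_nonneg (by linarith)
  have hexp1 : ρ ≤ Real.exp (-(s^2/(748*Q^2))) := by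
    have := Real.add_one_le_exp (-(s^2/(748*Q^2)))
    rw [hρdef]; linarith
  have hexp2 : ρ^T ≤ Real.exp (-(s^2/(748*Q^2)) * T) := by
    calc ρ^T ≤ (Real.exp (-(s^2/(748*Q^2))))^T := pow_le_pow_left₀ hρ0 hexp1 T
      _ = Real.exp (-(s^2/(748*Q^2)) * T) := by rw [← Real.exp_nat_mul, mul_comm]
  have harg : -(s^2/(748*Q^2)) * T ≤ -(2*Real.log (200*Q)) := by
    have h2 : s^2/(748*Q^2) * (1496 * Q^2 / s^2 * Real.log (200*Q)) = 2*Real.log (200*Q) := by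
      field_simp; ring
    have h3 : s^2/(748*Q^2) * (1496 * Q^2 / s^2 * Real.log (200*Q)) ≤ s^2/(748*Q^2) * T :=
      mul_le_mul_of_nonneg_left hT (le_of_lt hδpos)
    nlinarith [h2, h3]
  have hval : Real.exp (-(2*Real.log (200*Q))) = 1/((200*Q)*(200*Q)) := by
    rw [two_mul, neg_add, Real.exp_add, Real.exp_neg,
      Real.exp_log (by positivity), ← mul_inv, one_div]
  have hsmall : ρ^T * (8*Q^2) ≤ 1/5000 := by
    have h5 : ρ^T ≤ 1/((200*Q)*(200*Q)) := by
      calc ρ^T ≤ Real.exp (-(s^2/(748*Q^2)) * T) := hexp2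
        _ ≤ Real.exp (-(2*Real.log (200*Q))) := Real.exp_le_exp.mpr harg
        _ = _ := hval
    calc ρ^T * (8*Q^2) ≤ 1/((200*Q)*(200*Q)) * (8*Q^2) :=
          mul_le_mul_of_nonneg_right h5 (by positivity)
      _ = 1/5000 := by field_simp; ring
  have hJrow : ∀ i, ∑ j, (gtJ s Q ^ T) i j * q j ≤ 1/5000 * q i := by
    intro i
    calc ∑ j, (gtJ s Q ^ T) i j * q j ≤ ∑ j, (gtJ s Q ^ T) i j * w j :=
          Finset.sum_le_sum fun j _ => mul_le_mul_of_nonneg_left (hqw j) (hJTnn i j)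
      _ = (gtJ s Q ^ T).mulVec w i := by rw [Fin.sum_univ_three, hmv3]
      _ ≤ ρ^T * w i := hJTw i
      _ ≤ ρ^T * (8*Q^2 * q i) := mul_le_mul_of_nonneg_left (hwq i) (pow_nonneg hρ0 T)
      _ = (ρ^T * (8*Q^2)) * q i := by ring
      _ ≤ 1/5000 * q i := mul_le_mul_of_nonneg_right hsmall (hq i).le
  -- the inverse part
  set E : ℝ := 5497987*Q^2 - 359040 with hEdef
  have hE : 0 < E := by rw [hEdef]; nlinarith
  have hEne : E ≠ 0 := ne_of_gt hE
  have hElb : 5138947*Q^2 ≤ E := by rw [hEdef]; nlinarith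
  set x0 : ℝ := (11136*s^2/n + 113696)/E with hx0def
  set x1 : ℝ := (8*s^2*(34969*Q^2-1920)/n + 454784*Q^2)/E with hx1def
  set x2 : ℝ := (97353696*Q^2/n + 993958856*Q^2/s^2)/E with hx2def
  have h1920 : (0:ℝ) ≤ 34969*Q^2 - 1920 := by nlinarith
  have hx0nn : 0 ≤ x0 := by rw [hx0def]; positivity
  have hx1nn : 0 ≤ x1 := by
    rw [hx1def]
    apply div_nonneg _ hE.le
    have : 0 ≤ 8*s^2*(34969*Q^2-1920)/n := by positivity
    nlinarith [sq_nonneg Q]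
  have hx2nn : 0 ≤ x2 := by rw [hx2def]; positivity
  set P : Matrix (Fin 3) (Fin 3) ℝ := !![x0,x0,0;x1,x1,0;x2,x2,0] with hPdef
  have hPnn : ∀ i j, 0 ≤ P i j := by
    intro i j
    fin_cases i <;> fin_cases j <;>
      simp [hPdef, Matrix.vecHead, Matrix.vecTail] <;>
      first | exact hx0nn | exact hx1nn | exact hx2nn | norm_num
  set M : Matrix (Fin 3) (Fin 3) ℝ :=
    !![s/2, 0, -(2*s^3/(34969*Q^2));
       -(2*s^2/187), s^2/(374*Q^2), 0;
       -(120/s), -(87/s), s/4] with hMdef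
  have hM : (1 : Matrix (Fin 3) (Fin 3) ℝ) - gtJ s Q = M := by
    rw [hMdef]
    ext i j
    fin_cases i <;> fin_cases j <;>
      simp [gtJ, Matrix.one_apply, Matrix.sub_apply] <;> ring
  have hdet : M.det = s^4*E/(19565295376*Q^4) := by
    rw [hMdef, Matrix.det_fin_three, hEdef]
    norm_num [Matrix.vecHead, Matrix.vecTail, Matrix.cons_val_two]
    field_simp
    ring
  have hMP : M * P = gtH s Q n := by
    have hE' : 5497987*Q^2 - 359040 ≠ 0 := hEne
    rw [hMdef, hPdef, hx0def, hx1def, hx2def, hEdef]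
    ext i j
    fin_cases i <;> fin_cases j <;>
      (simp [gtH, Matrix.mul_apply, Fin.sum_univ_three, Matrix.vecHead, Matrix.vecTail];
       try field_simp;
       try ring)
  have hinv : (1 - gtJ s Q)⁻¹ * gtH s Q n = P := by
    rw [hM]
    have hu : IsUnit M.det := by
      rw [hdet]
      exact isUnit_iff_ne_zero.mpr (by positivity)
    calc M⁻¹ * gtH s Q n = M⁻¹ * (M * P) := by rw [hMP]
      _ = P := by rw [← Matrix.mul_assoc, Matrix.nonsing_inv_mul _ hu, Matrix.one_mul]
  -- per-row bounds for P
  have hb0 : x0 + x0 ≤ 0.6 * q 0 := by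
    have hsn : 11136*s^2/(n:ℝ) ≤ 11136 := by
      rw [div_le_iff₀ hn0]; nlinarith
    have hq0 : q 0 = 1 := by simp [hqdef]
    rw [hq0, hx0def, ← add_div, div_le_iff₀ hE]
    nlinarith [hElb, hQsq]
  have hb1 : x1 + x1 ≤ 0.6 * q 1 := by
    have ht : 8*s^2*(34969*Q^2-1920)/(n:ℝ) ≤ 279752*Q^2 := by
      rw [div_le_iff₀ hn0]
      nlinarith [mul_nonneg h1920 (by nlinarith : (0:ℝ) ≤ 1 - s^2),
        mul_nonneg (by linarith : (0:ℝ) ≤ (n:ℝ) - 1) (sq_nonneg Q)]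
    have hq1 : q 1 = 1 := by simp [hqdef]
    rw [hq1, hx1def, ← add_div, div_le_iff₀ hE]
    nlinarith [hElb, hQsq]
  have hb2 : x2 + x2 ≤ 0.6 * q 2 := by
    have hq2 : q 2 = 1453 / s^2 := by simp [hqdef]
    have hsn2 : s^2 ≤ (n:ℝ) := by nlinarith
    have h1 : 97353696*Q^2/(n:ℝ) ≤ 97353696*Q^2/s^2 := by
      apply div_le_div_of_nonneg_left (by positivity) (by positivity) hsn2
    have hkey : (2182625104*Q^2)/s^2 ≤ 0.6 * (1453/s^2) * E := by
      have h2 : 0.6 * (1453/s^2) * E = (871.8*E)/s^2 := by ring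
      rw [h2, div_le_div_iff₀ (by positivity) (by positivity : (0:ℝ) < s^2)]
      nlinarith [hQsq, sq_nonneg s, mul_pos (by positivity : (0:ℝ) < s^2) hE]
    rw [hq2, hx2def, ← add_div, div_le_iff₀ hE]
    have h3 : 993958856*Q^2/s^2 + 993958856*Q^2/s^2 + (97353696*Q^2/s^2 + 97353696*Q^2/s^2)
        = (2182625104*Q^2)/s^2 := by ring
    nlinarith [h1, hkey]
  -- finish
  rw [hinv]
  unfold wInfMatNorm
  refine ciSup_le fun i => ?_
  rw [div_le_iff₀ (hq i)]
  have hent : ∀ j, |(gtJ s Q ^ T + P) i j| = (gtJ s Q ^ T) i j + P i j := fun j => by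
    rw [Matrix.add_apply, abs_of_nonneg (add_nonneg (hJTnn i j) (hPnn i j))]
  simp only [hent]
  have hPsum : ∑ j, P i j * q j ≤ 0.6 * q i := by
    have hd : ∀ k, P i k = ![x0,x1,x2] i * ![(1:ℝ),1,0] k := by
      intro k; fin_cases i <;> fin_cases k <;> simp [hPdef, Matrix.vecHead, Matrix.vecTail]
    calc ∑ j, P i j * q j = ![x0,x1,x2] i * q 0 + ![x0,x1,x2] i * q 1 := by
          rw [Fin.sum_univ_three, hd 0, hd 1, hd 2]; simp
      _ ≤ 0.6 * q i := by
          have hq01 : q 0 = 1 ∧ q 1 = 1 := by constructor <;> simp [hqdef]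
          rw [hq01.1, hq01.2]
          fin_cases i <;> simp
          · have := hb0; simpa [hqdef] using this
          · have := hb1; simpa [hqdef] using this
          · have := hb2; simpa [hqdef] using this
  calc ∑ j, ((gtJ s Q ^ T) i j + P i j) * q j
      = (∑ j, (gtJ s Q ^ T) i j * q j) + ∑ j, P i j * q j := by
        rw [← Finset.sum_add_distrib]
        exact Finset.sum_congr rfl fun j _ => by ring
    _ ≤ 1/5000 * q i + 0.6 * q i := add_le_add (hJrow i) hPsum
    _ ≤ 0.7 * q i := by nlinarith [hq i]


lemma gt_step {w : Fin 3 → ℝ} (hw : ∀ i, 0 < w i) {A : Matrix (Fin 3) (Fin 3) ℝ}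
    {u v : Fin 3 → ℝ} (hu : (0:Fin 3 → ℝ) ≤ u) (hv : (0:Fin 3 → ℝ) ≤ v)
    (hvu : v ≤ A.mulVec u) {c : ℝ} (hA : wInfMatNorm w A ≤ c) :
    wInfVecNorm w v ≤ c * wInfVecNorm w u := by
  set N := wInfVecNorm w u with hN
  have hN0 : 0 ≤ N := by
    refine le_trans (div_nonneg (abs_nonneg _) (hw 0).le)
      (le_ciSup (Finite.bddAbove_range fun i => |u i| / w i) 0)
  have hub : ∀ j, u j ≤ w j * N := by
    intro j
    have h1 : |u j| / w j ≤ N := le_ciSup (Finite.bddAbove_range fun i => |u i| / w i) j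
    rw [abs_of_nonneg (hu j), div_le_iff₀ (hw j)] at h1
    linarith [h1]
  refine ciSup_le fun i => ?_
  rw [abs_of_nonneg (hv i), div_le_iff₀ (hw i)]
  have h2 : v i ≤ ∑ j, A i j * u j := by
    have := hvu i
    simpa [Matrix.mulVec, dotProduct] using this
  have h3 : ∑ j, A i j * u j ≤ (∑ j, |A i j| * w j) * N := by
    rw [Finset.sum_mul]
    refine Finset.sum_le_sum fun j _ => ?_
    calc A i j * u j ≤ |A i j| * u j := mul_le_mul_of_nonneg_right (le_abs_self _) (hu j)
      _ ≤ |A i j| * (w j * N) := mul_le_mul_of_nonneg_left (hub j) (abs_nonneg _)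
      _ = |A i j| * w j * N := by ring
  have h4 : (∑ j, |A i j| * w j) / w i ≤ c :=
    le_trans (le_ciSup (Finite.bddAbove_range fun i => (∑ j, |A i j| * w j) / w i) i) hA
  rw [div_le_iff₀ (hw i)] at h4
  calc v i ≤ (∑ j, |A i j| * w j) * N := le_trans h2 h3
    _ ≤ (c * w i) * N := mul_le_mul_of_nonneg_right h4 hN0
    _ = c * N * w i := by ring

/-- With `α = (1−σ²)²/(187QL)` and
`T ≥ (1496Q²/(1−σ²)²)·log(200Q)`, the outer-loop matrix of GT-SVRG satisfies
`‖J_α^T + (I₃ − J_α)⁻¹ H_α‖_∞^q ≤ 0.7` with `q = (1, 1, 1453/(1−σ²)²)`;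
consequently any nonnegative sequence obeying the outer-loop recursion decays
linearly at rate `0.7` in the norm `‖·‖_∞^q`. -/
theorem gtsvrg_outer_loop_contraction (μ L σ α Q : ℝ) (n : ℕ)
    (hμ : 0 < μ) (hμL : μ ≤ L) (hQ : Q = L / μ)
    (hσ0 : 0 ≤ σ) (hσ1 : σ < 1) (hn : 1 ≤ n)
    (hα : α = (1 - σ ^ 2) ^ 2 / (187 * Q * L))
    (T : ℕ) (hT : 1496 * Q ^ 2 / (1 - σ ^ 2) ^ 2 * Real.log (200 * Q) ≤ (T : ℝ)) :
    wInfMatNorm ![1, 1, 1453 / (1 - σ ^ 2) ^ 2]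
        (GTSVRGMatrixJ μ L σ α ^ T +
          (1 - GTSVRGMatrixJ μ L σ α)⁻¹ * GTSVRGMatrixH L σ α n) ≤ 0.7 ∧
      ∀ u : ℕ → Fin 3 → ℝ, (∀ t, 0 ≤ u t) →
        (∀ t, u (t + 1) ≤
          (GTSVRGMatrixJ μ L σ α ^ T +
            (1 - GTSVRGMatrixJ μ L σ α)⁻¹ * GTSVRGMatrixH L σ α n).mulVec (u t)) →
        ∀ t, wInfVecNorm ![1, 1, 1453 / (1 - σ ^ 2) ^ 2] (u (t + 1)) ≤
          0.7 * wInfVecNorm ![1, 1, 1453 / (1 - σ ^ 2) ^ 2] (u t) := by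
  have hL : 0 < L := lt_of_lt_of_le hμ hμL
  have hs0 : 0 < 1 - σ ^ 2 := by nlinarith
  have hs1 : 1 - σ ^ 2 ≤ 1 := by nlinarith
  have hQ1 : 1 ≤ Q := by
    rw [hQ, le_div_iff₀ hμ]; linarith
  have hQ0 : 0 < Q := lt_of_lt_of_le one_pos hQ1
  have hμne : μ ≠ 0 := ne_of_gt hμ
  have hLne : L ≠ 0 := ne_of_gt hL
  have hQne : Q ≠ 0 := ne_of_gt hQ0
  have hsne : (1:ℝ) - σ ^ 2 ≠ 0 := ne_of_gt hs0
  have hLQ : L = Q * μ := by rw [hQ]; field_simp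
  have hJeq : GTSVRGMatrixJ μ L σ α = gtJ (1 - σ ^ 2) Q := by
    ext i j
    fin_cases i <;> fin_cases j <;>
      (simp [GTSVRGMatrixJ, gtJ, hα, Matrix.vecHead, Matrix.vecTail];
       try rw [hLQ];
       try field_simp;
       try ring)
  have hHeq : GTSVRGMatrixH L σ α n = gtH (1 - σ ^ 2) Q n := by
    ext i j
    fin_cases i <;> fin_cases j <;>
      (simp [GTSVRGMatrixH, gtH, hα, Matrix.vecHead, Matrix.vecTail];
       try rw [hLQ];
       try field_simp;
       try ring)
  rw [hJeq, hHeq]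
  have hkey := gt_key (1 - σ ^ 2) Q n hs0 hs1 hQ1 hn T hT
  refine ⟨hkey, ?_⟩
  intro u hu hrec t
  have hrec' := hrec t
  have hwpos : ∀ i, 0 < (![1, 1, 1453 / (1 - σ ^ 2) ^ 2] : Fin 3 → ℝ) i := by
    intro i; fin_cases i <;> simp <;> positivity
  calc wInfVecNorm ![1, 1, 1453 / (1 - σ ^ 2) ^ 2] (u (t + 1))
      ≤ 0.7 * wInfVecNorm ![1, 1, 1453 / (1 - σ ^ 2) ^ 2] (u t) :=
        gt_step hwpos (hu t) (hu (t + 1)) hrec' hkey
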